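/- Let X₁,…,Xₙ be independent random variables taking values in a set 𝒳, let f : 𝒳ⁿ → ℝ be measurable with f(X) square-integrable, let σ be a fixed permutation of {1,…,n}, and fix i ∈ {1,…,n−1} and j ∈ {1,…,n} with j ∉ σ([i]). Define A_i = E[(f(X) − f(X^{(σ(i))})) (f(X^{σ([i−1])}) − f(X^{σ([i])}))]. Then A_i ≥ E[(f(X) − f(X^{(σ(i))})) (f(X^{σ([i−1]) ∪ {j}}) − f(X^{σ([i]) ∪ {j}}))] ≥ 0. -/

import Mathlib

open MeasureTheory ProbabilityTheory

open Classical in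
/-- The random vector obtained from `X` by replacing the coordinates indexed by `A`
by the corresponding coordinates of the independent copy `X'`. -/
noncomputable def resample {Ω 𝒳 : Type*} {n : ℕ} (X X' : Fin n → Ω → 𝒳)
    (A : Set (Fin n)) (ω : Ω) : Fin n → 𝒳 :=
  fun i => if i ∈ A then X' i ω else X i ω

section Aux

variable {𝒳 : Type*} [MeasurableSpace 𝒳] {n : ℕ}

open Classical in
/-- The resampling operation at the level of the two-copy coordinate space. -/
noncomputable def Rmap (S : Set (Fin n)) (y : Fin n ⊕ Fin n → 𝒳) : Fin n → 𝒳 :=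
  fun l => if l ∈ S then y (Sum.inr l) else y (Sum.inl l)

lemma measurable_Rmap (S : Set (Fin n)) : Measurable (Rmap (𝒳 := 𝒳) S) := by
  apply measurable_pi_lambda; intro l
  by_cases h : l ∈ S
  · simp only [Rmap, if_pos h]; exact measurable_pi_apply _
  · simp only [Rmap, if_neg h]; exact measurable_pi_apply _

/-- The complement of `AF ∪ {j}`. -/
def RFs (AF : Finset (Fin n)) (j : Fin n) : Finset (Fin n) :=
  Finset.univ.filter fun l => l ∉ AF ∧ l ≠ j

lemma mem_RFs {AF : Finset (Fin n)} {j l : Fin n} : l ∈ RFs AF j ↔ l ∉ AF ∧ l ≠ j := by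
  simp [RFs]

/-- Build a configuration from the pieces `z` (coordinates in `AF`), `v` (coordinate `j`) and
`w` (the other coordinates). -/
def build0 (AF : Finset (Fin n)) (j : Fin n) (z : {l // l ∈ AF} → 𝒳) (v : 𝒳)
    (w : {l // l ∈ RFs AF j} → 𝒳) : Fin n → 𝒳 :=
  fun l => if h : l ∈ AF then z ⟨l, h⟩ else if h2 : l = j then v
    else w ⟨l, mem_RFs.mpr ⟨h, h2⟩⟩

/-- As `build0`, but the coordinate `k` is replaced using `w'`. -/
def buildk (AF : Finset (Fin n)) (j k : Fin n) (pk : k ∈ RFs AF j) (z : {l // l ∈ AF} → 𝒳)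
    (v : 𝒳) (w w' : {l // l ∈ RFs AF j} → 𝒳) : Fin n → 𝒳 :=
  fun l => if l = k then w' ⟨k, pk⟩ else build0 AF j z v w l

lemma measurable_build0 (AF : Finset (Fin n)) (j : Fin n) :
    Measurable (fun q : ({l // l ∈ AF} → 𝒳) × 𝒳 × ({l // l ∈ RFs AF j} → 𝒳) =>
      build0 AF j q.1 q.2.1 q.2.2) := by
  apply measurable_pi_lambda; intro l
  by_cases h : l ∈ AF
  · simp only [build0, dif_pos h]
    exact (measurable_pi_apply _).comp measurable_fst
  · by_cases h2 : l = j
    · simp only [build0, dif_neg h, dif_pos h2]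
      exact measurable_fst.comp measurable_snd
    · simp only [build0, dif_neg h, dif_neg h2]
      exact (measurable_pi_apply _).comp (measurable_snd.comp measurable_snd)

lemma measurable_buildk (AF : Finset (Fin n)) (j k : Fin n) (pk : k ∈ RFs AF j) :
    Measurable (fun q : ({l // l ∈ AF} → 𝒳) × 𝒳 ×
        (({l // l ∈ RFs AF j} → 𝒳) × ({l // l ∈ RFs AF j} → 𝒳)) =>
      buildk AF j k pk q.1 q.2.1 q.2.2.1 q.2.2.2) := by
  apply measurable_pi_lambda; intro l
  by_cases h : l = k
  · simp only [buildk, if_pos h]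
    exact (measurable_pi_apply _).comp (measurable_snd.comp (measurable_snd.comp measurable_snd))
  · simp only [buildk, if_neg h]
    exact ((measurable_build0 AF j).comp
      (measurable_fst.prodMk (measurable_fst.comp measurable_snd |>.prodMk
        (measurable_fst.comp (measurable_snd.comp measurable_snd))))).eval.comp measurable_id

lemma prod_split {M : Type*} [CommMonoid M] (AF : Finset (Fin n)) (j : Fin n) (hj : j ∉ AF)
    (g : Fin n → M) :
    ∏ l, g l = (∏ a : {l // l ∈ AF}, g ↑a) * (g j * ∏ a : {l // l ∈ RFs AF j}, g ↑a) := by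
  classical
  have hjRF : j ∉ RFs AF j := by simp [mem_RFs]
  have hdisj : Disjoint AF (insert j (RFs AF j)) := by
    rw [Finset.disjoint_left]
    intro a ha hb
    rcases Finset.mem_insert.mp hb with rfl | hb
    · exact hj ha
    · exact (mem_RFs.mp hb).1 ha
  have huniv : AF ∪ insert j (RFs AF j) = Finset.univ := by
    ext l
    simp only [Finset.mem_union, Finset.mem_insert, mem_RFs, Finset.mem_univ, iff_true]
    by_cases h : l ∈ AF
    · exact Or.inl h
    · by_cases h2 : l = j
      · exact Or.inr (Or.inl h2)
      · exact Or.inr (Or.inr ⟨h, h2⟩)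
  rw [Finset.prod_coe_sort, Finset.prod_coe_sort]
  calc ∏ l, g l = ∏ l ∈ AF ∪ insert j (RFs AF j), g l := by rw [huniv]
    _ = (∏ l ∈ AF, g l) * ∏ l ∈ insert j (RFs AF j), g l := Finset.prod_union hdisj
    _ = (∏ l ∈ AF, g l) * (g j * ∏ l ∈ RFs AF j, g l) := by rw [Finset.prod_insert hjRF]

lemma sq_integral_le {α : Type*} [MeasurableSpace α] {μ : Measure α} [IsProbabilityMeasure μ]
    {u : α → ℝ} (hu : MemLp u 2 μ) : (∫ x, u x ∂μ) ^ 2 ≤ ∫ x, (u x) ^ 2 ∂μ := by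
  have h := variance_nonneg u μ
  rw [variance_eq_sub hu] at h
  have : (∫ x, (u ^ 2) x ∂μ) = ∫ x, (u x) ^ 2 ∂μ := by simp [Pi.pow_apply]
  rw [this] at h
  linarith

lemma MeasureTheory.MemLp.integrable_mul2 {α : Type*} [MeasurableSpace α] {μ : Measure α} {g h : α → ℝ}
    (hg : MemLp g 2 μ) (hh : MemLp h 2 μ) : Integrable (fun x => g x * h x) μ := by
  refine Integrable.mono' (hg.integrable_sq.add hh.integrable_sq) (hg.1.mul hh.1)
    (Filter.Eventually.of_forall fun x => ?_)
  rw [Real.norm_eq_abs, abs_mul]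
  simp only [Pi.add_apply]
  nlinarith [sq_nonneg (|g x| - |h x|), sq_abs (g x), sq_abs (h x)]

lemma map_prod_fst_snd {α β γ : Type*} [MeasurableSpace α] [MeasurableSpace β] [MeasurableSpace γ]
    (μ : Measure α) (ν : Measure β) (ρ : Measure γ) [IsProbabilityMeasure μ]
    [IsProbabilityMeasure ν] [IsProbabilityMeasure ρ] :
    ((μ.prod ν).prod ρ).map (fun r => (r.1.1, r.2)) = μ.prod ρ := by
  refine (Measure.prod_eq fun s t hs ht => ?_).symm
  rw [Measure.map_apply (measurable_fst.fst.prodMk measurable_snd) (hs.prod ht)]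
  have : (fun r : (α × β) × γ => (r.1.1, r.2)) ⁻¹' (s ×ˢ t) = (s ×ˢ Set.univ) ×ˢ t := by
    ext r; simp [Set.mem_prod]
  rw [this, Measure.prod_prod, Measure.prod_prod, measure_univ, mul_one]

lemma map_prod_snd_snd {α β γ : Type*} [MeasurableSpace α] [MeasurableSpace β] [MeasurableSpace γ]
    (μ : Measure α) (ν : Measure β) (ρ : Measure γ) [IsProbabilityMeasure μ]
    [IsProbabilityMeasure ν] [IsProbabilityMeasure ρ] :
    ((μ.prod ν).prod ρ).map (fun r => (r.1.2, r.2)) = ν.prod ρ := by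
  refine (Measure.prod_eq fun s t hs ht => ?_).symm
  rw [Measure.map_apply (measurable_fst.snd.prodMk measurable_snd) (hs.prod ht)]
  have : (fun r : (α × β) × γ => (r.1.2, r.2)) ⁻¹' (s ×ˢ t) = (Set.univ ×ˢ s) ×ˢ t := by
    ext r; simp [Set.mem_prod]
  rw [this, Measure.prod_prod, Measure.prod_prod, measure_univ, one_mul]

lemma build0_mem (AF : Finset (Fin n)) (j : Fin n) (z : {l // l ∈ AF} → 𝒳) (v : 𝒳)
    (w : {l // l ∈ RFs AF j} → 𝒳) {l : Fin n} (h : l ∈ AF) :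
    build0 AF j z v w l = z ⟨l, h⟩ := dif_pos h

lemma build0_jeq (AF : Finset (Fin n)) {j : Fin n} (hjA : j ∉ AF) (z : {l // l ∈ AF} → 𝒳)
    (v : 𝒳) (w : {l // l ∈ RFs AF j} → 𝒳) :
    build0 AF j z v w j = v := by
  rw [build0, dif_neg hjA, dif_pos rfl]

lemma build0_rest (AF : Finset (Fin n)) (j : Fin n) (z : {l // l ∈ AF} → 𝒳) (v : 𝒳)
    (w : {l // l ∈ RFs AF j} → 𝒳) {l : Fin n} (h1 : l ∉ AF) (h2 : l ≠ j) :
    build0 AF j z v w l = w ⟨l, mem_RFs.mpr ⟨h1, h2⟩⟩ := by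
  rw [build0, dif_neg h1, dif_neg h2]

end Aux

open Classical in
theorem master
    {Ω : Type*} [MeasurableSpace Ω] (P : Measure Ω) [IsProbabilityMeasure P]
    {𝒳 : Type*} [MeasurableSpace 𝒳] {n : ℕ}
    (X X' : Fin n → Ω → 𝒳)
    (hmeas : ∀ i, Measurable (X i)) (hmeas' : ∀ i, Measurable (X' i))
    (hindep : iIndepFun (Sum.elim X X' : Fin n ⊕ Fin n → Ω → 𝒳) P)
    (hid : ∀ i, IdentDistrib (X' i) (X i) P P)
    (f : (Fin n → 𝒳) → ℝ) (hf : Measurable f)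
    (hL2 : MemLp (fun ω => f (fun i => X i ω)) 2 P)
    (AF : Finset (Fin n)) (k j : Fin n) (hkA : k ∉ AF) (hjA : j ∉ AF) (hjk : j ≠ k) :
    (∫ ω, (f (fun l => X l ω) - f (resample X X' {k} ω)) *
        (f (resample X X' (↑AF ∪ {j}) ω) - f (resample X X' (↑AF ∪ {k} ∪ {j}) ω)) ∂P
      ≤ ∫ ω, (f (fun l => X l ω) - f (resample X X' {k} ω)) *
          (f (resample X X' (↑AF) ω) - f (resample X X' (↑AF ∪ {k}) ω)) ∂P) ∧
    0 ≤ ∫ ω, (f (fun l => X l ω) - f (resample X X' {k} ω)) *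
        (f (resample X X' (↑AF ∪ {j}) ω) - f (resample X X' (↑AF ∪ {k} ∪ {j}) ω)) ∂P := by
  classical
  haveI hPμ : ∀ l, IsProbabilityMeasure (P.map (X l)) :=
    fun l => Measure.isProbabilityMeasure_map (hmeas l).aemeasurable
  set ν : Fin n ⊕ Fin n → Measure 𝒳 := fun s => P.map (Sum.elim X X' s) with hνdef
  have hνmeas : ∀ s : Fin n ⊕ Fin n, Measurable (Sum.elim X X' s) := by
    rintro (l | l); exacts [hmeas l, hmeas' l]
  haveI hνprob : ∀ s, IsProbabilityMeasure (ν s) :=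
    fun s => Measure.isProbabilityMeasure_map (hνmeas s).aemeasurable
  have hνl : ∀ l, ν (Sum.inl l) = P.map (X l) := fun l => rfl
  have hνr : ∀ l, ν (Sum.inr l) = P.map (X l) := fun l => (hid l).map_eq
  set Φ : Ω → (Fin n ⊕ Fin n) → 𝒳 := fun ω s => Sum.elim X X' s ω with hΦdef
  have hΦmeas : Measurable Φ := measurable_pi_lambda _ hνmeas
  have hπ : P.map Φ = Measure.pi ν := by
    refine (Measure.pi_eq fun t ht => ?_).symm
    rw [Measure.map_apply hΦmeas (MeasurableSet.univ_pi ht)]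
    have hpre : Φ ⁻¹' Set.univ.pi t =
        ⋂ s ∈ (Finset.univ : Finset (Fin n ⊕ Fin n)), Sum.elim X X' s ⁻¹' t s := by
      ext ω; simp [Set.mem_pi, hΦdef]
    rw [hpre, hindep.measure_inter_preimage_eq_mul Finset.univ (fun s _ => ht s)]
    exact Finset.prod_congr rfl fun s _ => (Measure.map_apply (hνmeas s) (ht s)).symm
  have hmapR : ∀ S : Set (Fin n),
      (Measure.pi ν).map (Rmap S) = Measure.pi (fun l => P.map (X l)) := by
    intro S
    refine (Measure.pi_eq fun t ht => ?_).symm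
    rw [Measure.map_apply (measurable_Rmap S) (MeasurableSet.univ_pi ht)]
    set T : (s : Fin n ⊕ Fin n) → Set 𝒳 :=
      Sum.elim (fun l => if l ∈ S then Set.univ else t l)
        (fun l => if l ∈ S then t l else Set.univ) with hT
    have hTm : ∀ s, MeasurableSet (T s) := by
      rintro (l | l) <;> simp only [hT, Sum.elim_inl, Sum.elim_inr] <;> split_ifs <;>
        first | exact MeasurableSet.univ | exact ht l
    have hpre : Rmap S ⁻¹' Set.univ.pi t = Set.univ.pi T := by
      ext y
      simp only [Set.mem_preimage, Set.mem_pi, Set.mem_univ, true_implies, Rmap]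
      constructor
      · intro h s
        rcases s with l | l <;> simp only [hT, Sum.elim_inl, Sum.elim_inr] <;>
          split_ifs with hl
        · trivial
        · have := h l; rwa [if_neg hl] at this
        · have := h l; rwa [if_pos hl] at this
        · trivial
      · intro h l
        by_cases hl : l ∈ S
        · have := h (Sum.inr l)
          rw [if_pos hl]
          simpa only [hT, Sum.elim_inr, if_pos hl] using this
        · have := h (Sum.inl l)
          rw [if_neg hl]
          simpa only [hT, Sum.elim_inl, if_neg hl] using this
    rw [hpre, Measure.pi_pi, Fintype.prod_sum_type, ← Finset.prod_mul_distrib]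
    refine Finset.prod_congr rfl fun l _ => ?_
    by_cases hl : l ∈ S
    · simp only [hT, Sum.elim_inl, Sum.elim_inr, if_pos hl, hνr l, measure_univ, one_mul]
    · simp only [hT, Sum.elim_inl, Sum.elim_inr, if_neg hl, hνl l, measure_univ, mul_one]
  have hfρ : MemLp f 2 (Measure.pi (fun l => P.map (X l))) := by
    have hXvec : Measurable (fun ω (l : Fin n) => X l ω) := measurable_pi_lambda _ hmeas
    have h1 : MemLp f 2 (P.map (fun ω l => X l ω)) :=
      (memLp_map_measure_iff hf.aestronglyMeasurable hXvec.aemeasurable).mpr hL2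
    have h2 : P.map (fun ω l => X l ω) = Measure.pi (fun l => P.map (X l)) := by
      have hc : (fun ω (l : Fin n) => X l ω) = (Rmap ∅) ∘ Φ := by
        funext ω l; simp [Rmap, hΦdef]
      rw [hc, ← Measure.map_map (measurable_Rmap ∅) hΦmeas, hπ, hmapR]
    rwa [h2] at h1
  have hgS : ∀ S : Set (Fin n), MemLp (f ∘ Rmap S) 2 (Measure.pi ν) := by
    intro S
    refine (memLp_map_measure_iff hf.aestronglyMeasurable
      (measurable_Rmap S).aemeasurable).mp ?_
    rw [hmapR S]; exact hfρ
  -- the product-space side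
  have pk : k ∈ RFs AF j := mem_RFs.mpr ⟨hkA, Ne.symm hjk⟩
  set mA : Measure ({l // l ∈ AF} → 𝒳) := Measure.pi (fun a => P.map (X ↑a)) with hmA
  set mR : Measure ({l // l ∈ RFs AF j} → 𝒳) := Measure.pi (fun a => P.map (X ↑a)) with hmR
  set mj : Measure 𝒳 := P.map (X j) with hmj
  haveI : IsProbabilityMeasure mA := by rw [hmA]; infer_instance
  haveI : IsProbabilityMeasure mR := by rw [hmR]; infer_instance
  haveI : IsProbabilityMeasure mj := by rw [hmj]; infer_instance
  set Λ : (({l // l ∈ AF} → 𝒳) × ({l // l ∈ AF} → 𝒳)) ×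
      ((𝒳 × 𝒳) × (({l // l ∈ RFs AF j} → 𝒳) × ({l // l ∈ RFs AF j} → 𝒳))) →
      (Fin n ⊕ Fin n) → 𝒳 :=
    fun d => Sum.elim (build0 AF j d.1.1 d.2.1.1 d.2.2.1) (build0 AF j d.1.2 d.2.1.2 d.2.2.2)
    with hΛdef
  have hΛmeas : Measurable Λ := by
    apply measurable_pi_lambda
    rintro (l | l)
    · show Measurable fun d => Λ d (Sum.inl l)
      simp only [hΛdef, Sum.elim_inl]
      exact (measurable_pi_apply l).comp ((measurable_build0 AF j).comp
        ((measurable_fst.comp measurable_fst).prodMk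
          (((measurable_fst.comp measurable_fst).comp measurable_snd).prodMk
            ((measurable_fst.comp measurable_snd).comp measurable_snd))))
    · show Measurable fun d => Λ d (Sum.inr l)
      simp only [hΛdef, Sum.elim_inr]
      exact (measurable_pi_apply l).comp ((measurable_build0 AF j).comp
        ((measurable_snd.comp measurable_fst).prodMk
          (((measurable_snd.comp measurable_fst).comp measurable_snd).prodMk
            ((measurable_snd.comp measurable_snd).comp measurable_snd))))
  have hΛm : ((mA.prod mA).prod ((mj.prod mj).prod (mR.prod mR))).map Λ = Measure.pi ν := by
    refine (Measure.pi_eq fun t ht => ?_).symm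
    rw [Measure.map_apply hΛmeas (MeasurableSet.univ_pi ht)]
    have hpre : Λ ⁻¹' Set.univ.pi t =
        ((Set.univ.pi fun a : {l // l ∈ AF} => t (Sum.inl ↑a)) ×ˢ
          (Set.univ.pi fun a : {l // l ∈ AF} => t (Sum.inr ↑a))) ×ˢ
        ((t (Sum.inl j) ×ˢ t (Sum.inr j)) ×ˢ
          ((Set.univ.pi fun a : {l // l ∈ RFs AF j} => t (Sum.inl ↑a)) ×ˢ
           (Set.univ.pi fun a : {l // l ∈ RFs AF j} => t (Sum.inr ↑a)))) := by
      ext d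
      obtain ⟨⟨z, z'⟩, ⟨v, v'⟩, w, w'⟩ := d
      simp only [Set.mem_preimage, Set.mem_pi, Set.mem_univ, true_implies, Set.mem_prod,
        hΛdef, Sum.elim_inl, Sum.elim_inr]
      constructor
      · intro h
        refine ⟨⟨fun a => ?_, fun a => ?_⟩, ⟨?_, ?_⟩, fun a => ?_, fun a => ?_⟩
        · have := h (Sum.inl ↑a)
          rwa [Sum.elim_inl, build0_mem AF j z v w a.2, Subtype.coe_eta] at this
        · have := h (Sum.inr ↑a)
          rwa [Sum.elim_inr, build0_mem AF j z' v' w' a.2, Subtype.coe_eta] at this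
        · have := h (Sum.inl j)
          rwa [Sum.elim_inl, build0_jeq AF hjA] at this
        · have := h (Sum.inr j)
          rwa [Sum.elim_inr, build0_jeq AF hjA] at this
        · have := h (Sum.inl ↑a)
          rwa [Sum.elim_inl, build0_rest AF j z v w (mem_RFs.mp a.2).1 (mem_RFs.mp a.2).2,
            Subtype.coe_eta] at this
        · have := h (Sum.inr ↑a)
          rwa [Sum.elim_inr, build0_rest AF j z' v' w' (mem_RFs.mp a.2).1 (mem_RFs.mp a.2).2,
            Subtype.coe_eta] at this
      · rintro ⟨⟨h1, h2⟩, ⟨h3, h4⟩, h5, h6⟩ s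
        rcases s with l | l
        · by_cases hl : l ∈ AF
          · rw [Sum.elim_inl, build0_mem AF j z v w hl]; exact h1 ⟨l, hl⟩
          · by_cases hlj : l = j
            · subst hlj; rw [Sum.elim_inl, build0_jeq AF hjA]; exact h3
            · rw [Sum.elim_inl, build0_rest AF j z v w hl hlj]; exact h5 ⟨l, mem_RFs.mpr ⟨hl, hlj⟩⟩
        · by_cases hl : l ∈ AF
          · rw [Sum.elim_inr, build0_mem AF j z' v' w' hl]; exact h2 ⟨l, hl⟩
          · by_cases hlj : l = j
            · subst hlj; rw [Sum.elim_inr, build0_jeq AF hjA]; exact h4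
            · rw [Sum.elim_inr, build0_rest AF j z' v' w' hl hlj]; exact h6 ⟨l, mem_RFs.mpr ⟨hl, hlj⟩⟩
    rw [hpre, Measure.prod_prod, Measure.prod_prod, Measure.prod_prod, Measure.prod_prod,
      Measure.prod_prod, hmA, hmR,
      Measure.pi_pi, Measure.pi_pi, Measure.pi_pi, Measure.pi_pi,
      Fintype.prod_sum_type,
      prod_split AF j hjA (fun l => ν (Sum.inl l) (t (Sum.inl l))),
      prod_split AF j hjA (fun l => ν (Sum.inr l) (t (Sum.inr l)))]
    simp only [hνl, hνr, hmj]
    ring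
  -- functions on the two-copy coordinate space
  set g1 : ((Fin n ⊕ Fin n) → 𝒳) → ℝ :=
    fun y => f (Rmap ∅ y) - f (Rmap ({k} : Set (Fin n)) y) with hg1def
  set gA : ((Fin n ⊕ Fin n) → 𝒳) → ℝ :=
    fun y => f (Rmap (↑AF : Set (Fin n)) y) - f (Rmap (↑AF ∪ {k}) y) with hgAdef
  set gAj : ((Fin n ⊕ Fin n) → 𝒳) → ℝ :=
    fun y => f (Rmap ((↑AF : Set (Fin n)) ∪ {j}) y) - f (Rmap (↑AF ∪ {k} ∪ {j}) y) with hgAjdef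
  have hg1m : Measurable g1 := (hf.comp (measurable_Rmap _)).sub (hf.comp (measurable_Rmap _))
  have hgAm : Measurable gA := (hf.comp (measurable_Rmap _)).sub (hf.comp (measurable_Rmap _))
  have hgAjm : Measurable gAj := (hf.comp (measurable_Rmap _)).sub (hf.comp (measurable_Rmap _))
  have hg1L : MemLp g1 2 (Measure.pi ν) := (hgS ∅).sub (hgS {k})
  have hgAL : MemLp gA 2 (Measure.pi ν) := (hgS _).sub (hgS _)
  have hgAjL : MemLp gAj 2 (Measure.pi ν) := (hgS _).sub (hgS _)
  have hresample : ∀ (S : Set (Fin n)) (ω : Ω), resample X X' S ω = Rmap S (Φ ω) :=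
    fun S ω => rfl
  have hXvecR : ∀ ω, (fun l => X l ω) = Rmap ∅ (Φ ω) := by
    intro ω; funext l; simp [Rmap, hΦdef]
  have hI1 : ∫ ω, (f (fun l => X l ω) - f (resample X X' {k} ω)) *
      (f (resample X X' (↑AF) ω) - f (resample X X' (↑AF ∪ {k}) ω)) ∂P
      = ∫ y, g1 y * gA y ∂Measure.pi ν := by
    rw [← hπ, integral_map (f := fun y => g1 y * gA y) hΦmeas.aemeasurable (hg1m.mul hgAm).aestronglyMeasurable]
    refine integral_congr_ae (Filter.Eventually.of_forall fun ω => ?_)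
    simp only [hg1def, hgAdef]
    rw [← hXvecR ω, ← hresample, ← hresample, ← hresample]
  have hI2 : ∫ ω, (f (fun l => X l ω) - f (resample X X' {k} ω)) *
      (f (resample X X' (↑AF ∪ {j}) ω) - f (resample X X' (↑AF ∪ {k} ∪ {j}) ω)) ∂P
      = ∫ y, g1 y * gAj y ∂Measure.pi ν := by
    rw [← hπ, integral_map (f := fun y => g1 y * gAj y) hΦmeas.aemeasurable (hg1m.mul hgAjm).aestronglyMeasurable]
    refine integral_congr_ae (Filter.Eventually.of_forall fun ω => ?_)
    simp only [hg1def, hgAjdef]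
    rw [← hXvecR ω, ← hresample, ← hresample, ← hresample]
  -- the core function G
  set G : ({l // l ∈ AF} → 𝒳) → 𝒳 →
      (({l // l ∈ RFs AF j} → 𝒳) × ({l // l ∈ RFs AF j} → 𝒳)) → ℝ :=
    fun z v ww => f (build0 AF j z v ww.1) - f (buildk AF j k pk z v ww.1 ww.2) with hGdef
  -- composition identities
  have hc0 : ∀ d, Rmap ∅ (Λ d) = build0 AF j d.1.1 d.2.1.1 d.2.2.1 := by
    intro d; funext l
    simp only [Rmap, Set.mem_empty_iff_false, if_false, hΛdef, Sum.elim_inl]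
  have hck : ∀ d, Rmap {k} (Λ d) = buildk AF j k pk d.1.1 d.2.1.1 d.2.2.1 d.2.2.2 := by
    intro d; funext l
    simp only [Rmap, hΛdef, buildk]
    by_cases hl : l = k
    · have hm : l ∈ ({k} : Set (Fin n)) := hl
      rw [if_pos hm, if_pos hl, Sum.elim_inr,
        build0_rest AF j _ _ _ (by rw [hl]; exact hkA) (by rw [hl]; exact Ne.symm hjk)]
      exact congrArg _ (Subtype.ext hl)
    · have hm : l ∉ ({k} : Set (Fin n)) := hl
      rw [if_neg hm, if_neg hl, Sum.elim_inl]
  have hcA : ∀ d, Rmap (↑AF) (Λ d) = build0 AF j d.1.2 d.2.1.1 d.2.2.1 := by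
    intro d; funext l
    simp only [Rmap, hΛdef]
    by_cases hl : l ∈ AF
    · have hm : l ∈ (↑AF : Set (Fin n)) := hl
      rw [if_pos hm, Sum.elim_inr, build0_mem AF j _ _ _ hl, build0_mem AF j _ _ _ hl]
    · have hm : l ∉ (↑AF : Set (Fin n)) := hl
      rw [if_neg hm, Sum.elim_inl]
      by_cases hlj : l = j
      · rw [hlj, build0_jeq AF hjA, build0_jeq AF hjA]
      · rw [build0_rest AF j _ _ _ hl hlj, build0_rest AF j _ _ _ hl hlj]
  have hcB : ∀ d, Rmap (↑AF ∪ {k}) (Λ d)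
      = buildk AF j k pk d.1.2 d.2.1.1 d.2.2.1 d.2.2.2 := by
    intro d; funext l
    simp only [Rmap, hΛdef, buildk]
    by_cases hlk : l = k
    · have hm : l ∈ (↑AF ∪ {k} : Set (Fin n)) := Or.inr hlk
      rw [if_pos hm, if_pos hlk, Sum.elim_inr,
        build0_rest AF j _ _ _ (by rw [hlk]; exact hkA) (by rw [hlk]; exact Ne.symm hjk)]
      exact congrArg _ (Subtype.ext hlk)
    · rw [if_neg hlk]
      by_cases hl : l ∈ AF
      · have hm : l ∈ (↑AF ∪ {k} : Set (Fin n)) := Or.inl hl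
        rw [if_pos hm, Sum.elim_inr, build0_mem AF j _ _ _ hl, build0_mem AF j _ _ _ hl]
      · have hm : l ∉ (↑AF ∪ {k} : Set (Fin n)) := by
          rintro (h | h); exacts [hl h, hlk h]
        rw [if_neg hm, Sum.elim_inl]
        by_cases hlj : l = j
        · rw [hlj, build0_jeq AF hjA, build0_jeq AF hjA]
        · rw [build0_rest AF j _ _ _ hl hlj, build0_rest AF j _ _ _ hl hlj]
  have hcAj : ∀ d, Rmap (↑AF ∪ {j}) (Λ d) = build0 AF j d.1.2 d.2.1.2 d.2.2.1 := by
    intro d; funext l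
    simp only [Rmap, hΛdef]
    by_cases hl : l ∈ AF
    · have hm : l ∈ (↑AF ∪ {j} : Set (Fin n)) := Or.inl hl
      rw [if_pos hm, Sum.elim_inr, build0_mem AF j _ _ _ hl, build0_mem AF j _ _ _ hl]
    · by_cases hlj : l = j
      · have hm : l ∈ (↑AF ∪ {j} : Set (Fin n)) := Or.inr hlj
        rw [if_pos hm, Sum.elim_inr, hlj, build0_jeq AF hjA, build0_jeq AF hjA]
      · have hm : l ∉ (↑AF ∪ {j} : Set (Fin n)) := by
          rintro (h | h); exacts [hl h, hlj h]
        rw [if_neg hm, Sum.elim_inl, build0_rest AF j _ _ _ hl hlj,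
          build0_rest AF j _ _ _ hl hlj]
  have hcBj : ∀ d, Rmap (↑AF ∪ {k} ∪ {j}) (Λ d)
      = buildk AF j k pk d.1.2 d.2.1.2 d.2.2.1 d.2.2.2 := by
    intro d; funext l
    simp only [Rmap, hΛdef, buildk]
    by_cases hlk : l = k
    · have hm : l ∈ (↑AF ∪ {k} ∪ {j} : Set (Fin n)) := Or.inl (Or.inr hlk)
      rw [if_pos hm, if_pos hlk, Sum.elim_inr,
        build0_rest AF j _ _ _ (by rw [hlk]; exact hkA) (by rw [hlk]; exact Ne.symm hjk)]
      exact congrArg _ (Subtype.ext hlk)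
    · rw [if_neg hlk]
      by_cases hl : l ∈ AF
      · have hm : l ∈ (↑AF ∪ {k} ∪ {j} : Set (Fin n)) := Or.inl (Or.inl hl)
        rw [if_pos hm, Sum.elim_inr, build0_mem AF j _ _ _ hl, build0_mem AF j _ _ _ hl]
      · by_cases hlj : l = j
        · have hm : l ∈ (↑AF ∪ {k} ∪ {j} : Set (Fin n)) := Or.inr hlj
          rw [if_pos hm, Sum.elim_inr, hlj, build0_jeq AF hjA, build0_jeq AF hjA]
        · have hm : l ∉ (↑AF ∪ {k} ∪ {j} : Set (Fin n)) := by
            rintro ((h | h) | h); exacts [hl h, hlk h, hlj h]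
          rw [if_neg hm, Sum.elim_inl, build0_rest AF j _ _ _ hl hlj,
            build0_rest AF j _ _ _ hl hlj]
  -- L² facts on the product space
  have hGzL2 : MemLp (fun d => G d.1.1 d.2.1.1 d.2.2) 2
      ((mA.prod mA).prod ((mj.prod mj).prod (mR.prod mR))) := by
    have he : (fun d => G d.1.1 d.2.1.1 d.2.2) = g1 ∘ Λ := by
      funext d
      simp only [Function.comp, hg1def, hGdef]
      rw [hc0 d, hck d]
    rw [he]
    exact (memLp_map_measure_iff hg1m.aestronglyMeasurable hΛmeas.aemeasurable).mp
      (by rw [hΛm]; exact hg1L)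
  have hGAL2 : MemLp (fun d => G d.1.2 d.2.1.1 d.2.2) 2
      ((mA.prod mA).prod ((mj.prod mj).prod (mR.prod mR))) := by
    have he : (fun d => G d.1.2 d.2.1.1 d.2.2) = gA ∘ Λ := by
      funext d
      simp only [Function.comp, hgAdef, hGdef]
      rw [hcA d, hcB d]
    rw [he]
    exact (memLp_map_measure_iff hgAm.aestronglyMeasurable hΛmeas.aemeasurable).mp
      (by rw [hΛm]; exact hgAL)
  have hGAjL2 : MemLp (fun d => G d.1.2 d.2.1.2 d.2.2) 2
      ((mA.prod mA).prod ((mj.prod mj).prod (mR.prod mR))) := by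
    have he : (fun d => G d.1.2 d.2.1.2 d.2.2) = gAj ∘ Λ := by
      funext d
      simp only [Function.comp, hgAjdef, hGdef]
      rw [hcAj d, hcBj d]
    rw [he]
    exact (memLp_map_measure_iff hgAjm.aestronglyMeasurable hΛmeas.aemeasurable).mp
      (by rw [hΛm]; exact hgAjL)
  have hIL : Integrable (fun d => G d.1.1 d.2.1.1 d.2.2 * G d.1.2 d.2.1.1 d.2.2)
      ((mA.prod mA).prod ((mj.prod mj).prod (mR.prod mR))) := hGzL2.integrable_mul2 hGAL2
  have hIR : Integrable (fun d => G d.1.1 d.2.1.1 d.2.2 * G d.1.2 d.2.1.2 d.2.2)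
      ((mA.prod mA).prod ((mj.prod mj).prod (mR.prod mR))) := hGzL2.integrable_mul2 hGAjL2
  -- integral transfer to the product space
  have hGL : ∫ y, g1 y * gA y ∂Measure.pi ν
      = ∫ d, G d.1.1 d.2.1.1 d.2.2 * G d.1.2 d.2.1.1 d.2.2
          ∂((mA.prod mA).prod ((mj.prod mj).prod (mR.prod mR))) := by
    rw [← hΛm, integral_map (f := fun y => g1 y * gA y) hΛmeas.aemeasurable (hg1m.mul hgAm).aestronglyMeasurable]
    refine integral_congr_ae (Filter.Eventually.of_forall fun d => ?_)
    simp only [hg1def, hgAdef, hGdef]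
    rw [hc0 d, hck d, hcA d, hcB d]
  have hGR : ∫ y, g1 y * gAj y ∂Measure.pi ν
      = ∫ d, G d.1.1 d.2.1.1 d.2.2 * G d.1.2 d.2.1.2 d.2.2
          ∂((mA.prod mA).prod ((mj.prod mj).prod (mR.prod mR))) := by
    rw [← hΛm, integral_map (f := fun y => g1 y * gAj y) hΛmeas.aemeasurable (hg1m.mul hgAjm).aestronglyMeasurable]
    refine integral_congr_ae (Filter.Eventually.of_forall fun d => ?_)
    simp only [hg1def, hgAjdef, hGdef]
    rw [hc0 d, hck d, hcAj d, hcBj d]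
  -- the auxiliary function Gh and its partial integral Hfun
  set Gh : ({l // l ∈ AF} → 𝒳) ×
      (𝒳 × (({l // l ∈ RFs AF j} → 𝒳) × ({l // l ∈ RFs AF j} → 𝒳))) → ℝ :=
    fun q => G q.1 q.2.1 q.2.2 with hGhdef
  have hGhm : Measurable Gh := by
    simp only [hGhdef, hGdef]
    exact (hf.comp ((measurable_build0 AF j).comp (measurable_fst.prodMk
        ((measurable_fst.comp measurable_snd).prodMk
          ((measurable_fst.comp measurable_snd).comp measurable_snd))))).sub
      (hf.comp (measurable_buildk AF j k pk))
  set Proj : (({l // l ∈ AF} → 𝒳) × ({l // l ∈ AF} → 𝒳)) ×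
      ((𝒳 × 𝒳) × (({l // l ∈ RFs AF j} → 𝒳) × ({l // l ∈ RFs AF j} → 𝒳))) →
      ({l // l ∈ AF} → 𝒳) ×
      (𝒳 × (({l // l ∈ RFs AF j} → 𝒳) × ({l // l ∈ RFs AF j} → 𝒳))) :=
    fun d => (d.1.1, (d.2.1.1, d.2.2)) with hProjdef
  have hθ1m : Measurable (fun r : (𝒳 × 𝒳) ×
      (({l // l ∈ RFs AF j} → 𝒳) × ({l // l ∈ RFs AF j} → 𝒳)) => (r.1.1, r.2)) :=
    measurable_fst.fst.prodMk measurable_snd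
  have hθ2m : Measurable (fun r : (𝒳 × 𝒳) ×
      (({l // l ∈ RFs AF j} → 𝒳) × ({l // l ∈ RFs AF j} → 𝒳)) => (r.1.2, r.2)) :=
    measurable_fst.snd.prodMk measurable_snd
  have hProjm : Measurable Proj := by
    rw [hProjdef]
    exact measurable_fst.fst.prodMk
      ((measurable_fst.fst.comp measurable_snd).prodMk measurable_snd.snd)
  have hmapProj : ((mA.prod mA).prod ((mj.prod mj).prod (mR.prod mR))).map Proj
      = mA.prod (mj.prod (mR.prod mR)) := by
    refine (Measure.prod_eq fun s t hs ht => ?_).symm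
    rw [Measure.map_apply hProjm (hs.prod ht)]
    have hpre : Proj ⁻¹' (s ×ˢ t)
        = (s ×ˢ (Set.univ : Set ({l // l ∈ AF} → 𝒳))) ×ˢ
          ((fun r : (𝒳 × 𝒳) ×
            (({l // l ∈ RFs AF j} → 𝒳) × ({l // l ∈ RFs AF j} → 𝒳)) => (r.1.1, r.2)) ⁻¹' t) := by
      ext d
      simp only [hProjdef, Set.mem_preimage, Set.mem_prod, Set.mem_univ, and_true]
    rw [hpre, Measure.prod_prod, Measure.prod_prod, measure_univ, mul_one,
      ← Measure.map_apply hθ1m ht, map_prod_fst_snd]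
  have hGh2 : MemLp Gh 2 (mA.prod (mj.prod (mR.prod mR))) := by
    rw [← hmapProj]
    refine (memLp_map_measure_iff hGhm.aestronglyMeasurable hProjm.aemeasurable).mpr ?_
    exact hGzL2
  set Hfun : 𝒳 × (({l // l ∈ RFs AF j} → 𝒳) × ({l // l ∈ RFs AF j} → 𝒳)) → ℝ :=
    fun p => ∫ z, Gh (z, p) ∂mA with hHdef
  have hHsm : StronglyMeasurable Hfun := by
    rw [hHdef]
    exact hGhm.stronglyMeasurable.integral_prod_left'
  have hGhsq : Integrable (fun q => Gh q ^ 2) (mA.prod (mj.prod (mR.prod mR))) :=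
    hGh2.integrable_sq
  have hsecG : ∀ᵐ p ∂(mj.prod (mR.prod mR)), Integrable (fun z => Gh (z, p) ^ 2) mA :=
    hGhsq.prod_left_ae
  have hdom : Integrable (fun p => ∫ z, Gh (z, p) ^ 2 ∂mA) (mj.prod (mR.prod mR)) :=
    hGhsq.integral_prod_right
  have hHsq : Integrable (fun p => Hfun p * Hfun p) (mj.prod (mR.prod mR)) := by
    refine Integrable.mono' hdom (hHsm.mul hHsm).aestronglyMeasurable ?_
    filter_upwards [hsecG] with p hp
    have hsm : Measurable fun z => Gh (z, p) := hGhm.comp (measurable_id.prodMk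
      measurable_const)
    have hmemp : MemLp (fun z => Gh (z, p)) 2 mA :=
      (memLp_two_iff_integrable_sq hsm.aestronglyMeasurable).mpr hp
    have hj2 := sq_integral_le hmemp
    have e : Hfun p = ∫ z, Gh (z, p) ∂mA := by rw [hHdef]
    rw [Real.norm_eq_abs, e, abs_mul]
    nlinarith [abs_nonneg (∫ z, Gh (z, p) ∂mA), sq_abs (∫ z, Gh (z, p) ∂mA)]
  have hH2 : MemLp Hfun 2 (mj.prod (mR.prod mR)) :=
    (memLp_two_iff_integrable_sq hHsm.aestronglyMeasurable).mpr
      (by simpa [pow_two] using hHsq)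
  have hH1 : MemLp (fun r : (𝒳 × 𝒳) ×
      (({l // l ∈ RFs AF j} → 𝒳) × ({l // l ∈ RFs AF j} → 𝒳)) => Hfun (r.1.1, r.2)) 2
      ((mj.prod mj).prod (mR.prod mR)) := by
    have h' : MemLp Hfun 2 (((mj.prod mj).prod (mR.prod mR)).map fun r => (r.1.1, r.2)) := by
      rw [map_prod_fst_snd]; exact hH2
    exact (memLp_map_measure_iff h'.aestronglyMeasurable hθ1m.aemeasurable).mp h'
  have hH1' : MemLp (fun r : (𝒳 × 𝒳) ×
      (({l // l ∈ RFs AF j} → 𝒳) × ({l // l ∈ RFs AF j} → 𝒳)) => Hfun (r.1.2, r.2)) 2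
      ((mj.prod mj).prod (mR.prod mR)) := by
    have h' : MemLp Hfun 2 (((mj.prod mj).prod (mR.prod mR)).map fun r => (r.1.2, r.2)) := by
      rw [map_prod_snd_snd]; exact hH2
    exact (memLp_map_measure_iff h'.aestronglyMeasurable hθ2m.aemeasurable).mp h'
  -- Fubini chains
  have hQL : ∫ d, G d.1.1 d.2.1.1 d.2.2 * G d.1.2 d.2.1.1 d.2.2
        ∂((mA.prod mA).prod ((mj.prod mj).prod (mR.prod mR)))
      = ∫ ww, ∫ v, Hfun (v, ww) * Hfun (v, ww) ∂mj ∂(mR.prod mR) := by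
    calc ∫ d, G d.1.1 d.2.1.1 d.2.2 * G d.1.2 d.2.1.1 d.2.2
          ∂((mA.prod mA).prod ((mj.prod mj).prod (mR.prod mR)))
        = ∫ r, ∫ p, G p.1 r.1.1 r.2 * G p.2 r.1.1 r.2 ∂(mA.prod mA)
            ∂((mj.prod mj).prod (mR.prod mR)) := integral_prod_symm _ hIL
      _ = ∫ r, Hfun (r.1.1, r.2) * Hfun (r.1.1, r.2) ∂((mj.prod mj).prod (mR.prod mR)) := by
          refine integral_congr_ae (Filter.Eventually.of_forall fun r => ?_)
          dsimp only
          rw [integral_prod_mul (fun z => G z r.1.1 r.2) (fun z => G z r.1.1 r.2)]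
      _ = ∫ ww, ∫ vv, Hfun (vv.1, ww) * Hfun (vv.1, ww) ∂(mj.prod mj) ∂(mR.prod mR) :=
          integral_prod_symm _ (hH1.integrable_mul2 hH1)
      _ = ∫ ww, ∫ v, Hfun (v, ww) * Hfun (v, ww) ∂mj ∂(mR.prod mR) := by
          refine integral_congr_ae (Filter.Eventually.of_forall fun ww => ?_)
          have h2 := integral_prod_mul (μ := mj) (ν := mj)
            (fun v => Hfun (v, ww) * Hfun (v, ww)) (fun _ => (1 : ℝ))
          simpa using h2
  have hQR : ∫ d, G d.1.1 d.2.1.1 d.2.2 * G d.1.2 d.2.1.2 d.2.2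
        ∂((mA.prod mA).prod ((mj.prod mj).prod (mR.prod mR)))
      = ∫ ww, (∫ v, Hfun (v, ww) ∂mj) * (∫ v, Hfun (v, ww) ∂mj) ∂(mR.prod mR) := by
    calc ∫ d, G d.1.1 d.2.1.1 d.2.2 * G d.1.2 d.2.1.2 d.2.2
          ∂((mA.prod mA).prod ((mj.prod mj).prod (mR.prod mR)))
        = ∫ r, ∫ p, G p.1 r.1.1 r.2 * G p.2 r.1.2 r.2 ∂(mA.prod mA)
            ∂((mj.prod mj).prod (mR.prod mR)) := integral_prod_symm _ hIR
      _ = ∫ r, Hfun (r.1.1, r.2) * Hfun (r.1.2, r.2) ∂((mj.prod mj).prod (mR.prod mR)) := by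
          refine integral_congr_ae (Filter.Eventually.of_forall fun r => ?_)
          dsimp only
          rw [integral_prod_mul (fun z => G z r.1.1 r.2) (fun z => G z r.1.2 r.2)]
      _ = ∫ ww, ∫ vv, Hfun (vv.1, ww) * Hfun (vv.2, ww) ∂(mj.prod mj) ∂(mR.prod mR) :=
          integral_prod_symm _ (hH1.integrable_mul2 hH1')
      _ = ∫ ww, (∫ v, Hfun (v, ww) ∂mj) * (∫ v, Hfun (v, ww) ∂mj) ∂(mR.prod mR) := by
          refine integral_congr_ae (Filter.Eventually.of_forall fun ww => ?_)
          exact integral_prod_mul (fun v => Hfun (v, ww)) (fun v => Hfun (v, ww))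
  -- final comparisons
  have hIntL' : Integrable (fun ww => ∫ v, Hfun (v, ww) * Hfun (v, ww) ∂mj) (mR.prod mR) :=
    hHsq.integral_prod_right
  have hKsm : StronglyMeasurable (fun ww : ({l // l ∈ RFs AF j} → 𝒳) ×
      ({l // l ∈ RFs AF j} → 𝒳) => ∫ v, Hfun (v, ww) ∂mj) :=
    hHsm.integral_prod_left'
  have hsecH : ∀ᵐ ww ∂(mR.prod mR), Integrable (fun v => Hfun (v, ww) * Hfun (v, ww)) mj :=
    hHsq.prod_left_ae
  have hkey : ∀ ww : ({l // l ∈ RFs AF j} → 𝒳) × ({l // l ∈ RFs AF j} → 𝒳),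
      Integrable (fun v => Hfun (v, ww) * Hfun (v, ww)) mj →
      (∫ v, Hfun (v, ww) ∂mj) * (∫ v, Hfun (v, ww) ∂mj)
        ≤ ∫ v, Hfun (v, ww) * Hfun (v, ww) ∂mj := by
    intro ww hww
    have hsm : Measurable fun v => Hfun (v, ww) :=
      hHsm.measurable.comp (measurable_id.prodMk measurable_const)
    have hmemw : MemLp (fun v => Hfun (v, ww)) 2 mj :=
      (memLp_two_iff_integrable_sq hsm.aestronglyMeasurable).mpr
        (by simpa [pow_two] using hww)
    have h1 := sq_integral_le hmemw
    calc (∫ v, Hfun (v, ww) ∂mj) * (∫ v, Hfun (v, ww) ∂mj)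
        = (∫ v, Hfun (v, ww) ∂mj) ^ 2 := (pow_two _).symm
      _ ≤ ∫ v, Hfun (v, ww) ^ 2 ∂mj := h1
      _ = ∫ v, Hfun (v, ww) * Hfun (v, ww) ∂mj := by simp_rw [pow_two]
  have hIntR' : Integrable
      (fun ww => (∫ v, Hfun (v, ww) ∂mj) * (∫ v, Hfun (v, ww) ∂mj)) (mR.prod mR) := by
    refine Integrable.mono' hIntL' (hKsm.mul hKsm).aestronglyMeasurable ?_
    filter_upwards [hsecH] with ww hww
    rw [Real.norm_eq_abs, abs_of_nonneg (mul_self_nonneg _)]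
    exact hkey ww hww
  have hae : (fun ww => (∫ v, Hfun (v, ww) ∂mj) * (∫ v, Hfun (v, ww) ∂mj))
      ≤ᵐ[mR.prod mR] fun ww => ∫ v, Hfun (v, ww) * Hfun (v, ww) ∂mj := by
    filter_upwards [hsecH] with ww hww
    exact hkey ww hww
  constructor
  · rw [hI2, hGR, hQR, hI1, hGL, hQL]
    exact integral_mono_ae hIntR' hIntL' hae
  · rw [hI2, hGR, hQR]
    exact integral_nonneg fun ww => mul_self_nonneg _




/-- Lemma 4.1 of the paper: for a fixed permutation `σ`, `i ∈ [n−1]` and `j ∉ σ([i])`,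
`A_i = E[(f(X) − f(X^{(σ(i))})) (f(X^{σ([i−1])}) − f(X^{σ([i])}))]` dominates the analogous
quantity in which `j` is added to both resampled index sets, and the latter is nonnegative.
Here `i : Fin n` is the 0-based version of the 1-based index `i+1`, so `i ∈ [n-1]`
becomes `(i : ℕ) + 1 < n`. -/
theorem Aterm_monotone
    {Ω : Type*} [MeasurableSpace Ω] (P : Measure Ω) [IsProbabilityMeasure P]
    {𝒳 : Type*} [MeasurableSpace 𝒳] (n : ℕ)
    (X X' : Fin n → Ω → 𝒳)
    (hmeas : ∀ i, Measurable (X i)) (hmeas' : ∀ i, Measurable (X' i))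
    (hindep : iIndepFun (Sum.elim X X' : Fin n ⊕ Fin n → Ω → 𝒳) P)
    (hid : ∀ i, IdentDistrib (X' i) (X i) P P)
    (f : (Fin n → 𝒳) → ℝ) (hf : Measurable f)
    (hL2 : MemLp (fun ω => f (fun i => X i ω)) 2 P)
    (σ : Equiv.Perm (Fin n)) (i : Fin n) (hi : (i : ℕ) + 1 < n)
    (j : Fin n) (hj : j ∉ σ '' {l | l ≤ i}) :
    (∫ ω, (f (fun l => X l ω) - f (resample X X' {σ i} ω)) *
        (f (resample X X' (σ '' {l | l < i} ∪ {j}) ω) -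
          f (resample X X' (σ '' {l | l ≤ i} ∪ {j}) ω)) ∂P
      ≤ ∫ ω, (f (fun l => X l ω) - f (resample X X' {σ i} ω)) *
          (f (resample X X' (σ '' {l | l < i}) ω) -
            f (resample X X' (σ '' {l | l ≤ i}) ω)) ∂P) ∧
    0 ≤ ∫ ω, (f (fun l => X l ω) - f (resample X X' {σ i} ω)) *
        (f (resample X X' (σ '' {l | l < i} ∪ {j}) ω) -
          f (resample X X' (σ '' {l | l ≤ i} ∪ {j}) ω)) ∂P := by
  classical
  set AF : Finset (Fin n) := Finset.univ.filter (fun m => σ.symm m < i) with hAF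
  have hA : σ '' {l | l < i} = ↑AF := by
    ext m
    simp only [Set.mem_image, Set.mem_setOf_eq, hAF, Finset.coe_filter, Finset.mem_univ,
      true_and]
    constructor
    · rintro ⟨l, hl, rfl⟩
      simpa using hl
    · intro h
      exact ⟨σ.symm m, h, σ.apply_symm_apply m⟩
  have hB : σ '' {l | l ≤ i} = ↑AF ∪ {σ i} := by
    ext m
    simp only [Set.mem_image, Set.mem_setOf_eq, Set.mem_union, Set.mem_singleton_iff, hAF,
      Finset.coe_filter, Finset.mem_univ, true_and]
    constructor
    · rintro ⟨l, hl, rfl⟩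
      rcases lt_or_eq_of_le hl with h | h
      · left; simpa using h
      · right; rw [h]
    · rintro (h | h)
      · exact ⟨σ.symm m, le_of_lt h, σ.apply_symm_apply m⟩
      · exact ⟨i, le_refl i, h.symm ▸ rfl⟩
  have hkA : σ i ∉ AF := by
    simp [hAF]
  rw [hB] at hj
  have hjA : j ∉ AF := by
    intro h
    exact hj (Or.inl h)
  have hjk : j ≠ σ i := by
    intro h
    exact hj (Or.inr h)
  rw [hA, hB]
  exact master P X X' hmeas hmeas' hindep hid f hf hL2 AF (σ i) j hkA hjA hjk
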